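/- With the notation of the previous setup (η₁, η₂, η₃ distinct unimodular, 0 < |λ| < 1, b₁, b₂, b₃ unimodular, B₀, B_λ nonzero, and x₄,…,y₆ defined accordingly), one has (s₄(y₅x₆ − x₅y₆) + s₅(x₄y₆ − y₄x₆))/(x₄y₅ − y₄x₅) = (1/(η₃ − η₂))·( s₄·conj(b₃/b₁)·(η₁ − η₂) + s₅·conj(b₂/b₁)·(η₃ − η₁) ) for all s₄, s₅ ∈ ℂ. -/

import Mathlib

open scoped ComplexConjugate

/-- With the Clark-point data, the quotient
`(s₄(y₅x₆ − x₅y₆) + s₅(x₄y₆ − y₄x₆))/(x₄y₅ − y₄x₅)` simplifies to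
`(1/(η₃ − η₂))·(s₄·conj(b₃/b₁)·(η₁ − η₂) + s₅·conj(b₂/b₁)·(η₃ − η₁))`. -/
theorem stmt8
    (η₁ η₂ η₃ : ℂ)
    (hη₁ : ‖η₁‖ = 1) (hη₂ : ‖η₂‖ = 1)
    (hη₃ : ‖η₃‖ = 1)
    (h12 : η₁ ≠ η₂) (h13 : η₁ ≠ η₃) (h23 : η₂ ≠ η₃)
    (lam : ℂ) (hlam0 : 0 < ‖lam‖) (hlam1 : ‖lam‖ < 1)
    (b₁ b₂ b₃ : ℂ)
    (hb₁ : ‖b₁‖ = 1) (hb₂ : ‖b₂‖ = 1)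
    (hb₃ : ‖b₃‖ = 1)
    (B₀ Blam : ℂ) (hB₀ : B₀ ≠ 0) (hBlam : Blam ≠ 0)
    (x₄ x₅ x₆ y₄ y₅ y₆ : ℂ)
    (hx₄ : x₄ = conj (b₂ * b₁) * B₀ ^ 2)
    (hx₅ : x₅ = conj (b₃ * b₁) * B₀ ^ 2)
    (hx₆ : x₆ = conj (b₃ * b₂) * B₀ ^ 2)
    (hy₄ : y₄ = conj (b₂ * b₁) * Blam ^ 2 /
        ((1 - conj lam * η₂) * (1 - conj lam * η₁)))
    (hy₅ : y₅ = conj (b₃ * b₁) * Blam ^ 2 /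
        ((1 - conj lam * η₃) * (1 - conj lam * η₁)))
    (hy₆ : y₆ = conj (b₃ * b₂) * Blam ^ 2 /
        ((1 - conj lam * η₃) * (1 - conj lam * η₂))) :
    ∀ s₄ s₅ : ℂ,
      (s₄ * (y₅ * x₆ - x₅ * y₆) + s₅ * (x₄ * y₆ - y₄ * x₆)) /
          (x₄ * y₅ - y₄ * x₅) =
        (1 / (η₃ - η₂)) *
          (s₄ * conj (b₃ / b₁) * (η₁ - η₂) + s₅ * conj (b₂ / b₁) * (η₃ - η₁)) := by

  intro s₄ s₅
  have hb₁0 : b₁ ≠ 0 := by intro h; simp [h] at hb₁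
  have hb₂0 : b₂ ≠ 0 := by intro h; simp [h] at hb₂
  have hb₃0 : b₃ ≠ 0 := by intro h; simp [h] at hb₃
  have hcb₁ : conj b₁ ≠ 0 := by simpa using hb₁0
  have hcb₂ : conj b₂ ≠ 0 := by simpa using hb₂0
  have hcb₃ : conj b₃ ≠ 0 := by simpa using hb₃0
  have hlamne : lam ≠ 0 := by
    intro h; simp [h] at hlam0
  have hclam : conj lam ≠ 0 := by simpa using hlamne
  have hd : ∀ η : ℂ, ‖η‖ = 1 → (1 - conj lam * η) ≠ 0 := by
    intro η hη h
    have : conj lam * η = 1 := by linear_combination -h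
    have := congrArg norm this
    rw [norm_mul, Complex.norm_conj, hη, mul_one, norm_one] at this
    exact absurd this (ne_of_lt hlam1)
  have hd₁ := hd η₁ hη₁
  have hd₂ := hd η₂ hη₂
  have hd₃ := hd η₃ hη₃
  have h32 : η₃ - η₂ ≠ 0 := sub_ne_zero.mpr (Ne.symm h23)
  have key : x₄ * y₅ - y₄ * x₅ =
      (conj b₁ ^ 2 * conj b₂ * conj b₃ * B₀ ^ 2 * Blam ^ 2 * conj lam * (η₃ - η₂)) /
        ((1 - conj lam * η₁) * ((1 - conj lam * η₂) * (1 - conj lam * η₃))) := by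
    rw [hx₄, hx₅, hy₄, hy₅]
    simp only [map_mul]
    field_simp
    ring
  have hden : x₄ * y₅ - y₄ * x₅ ≠ 0 := by
    rw [key]
    refine div_ne_zero ?_ (mul_ne_zero hd₁ (mul_ne_zero hd₂ hd₃))
    exact mul_ne_zero (mul_ne_zero (mul_ne_zero (mul_ne_zero (mul_ne_zero
      (mul_ne_zero (pow_ne_zero 2 hcb₁) hcb₂) hcb₃) (pow_ne_zero 2 hB₀))
      (pow_ne_zero 2 hBlam)) hclam) h32
  rw [div_eq_iff hden, hx₄, hx₅, hx₆, hy₄, hy₅, hy₆]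
  rw [map_div₀, map_div₀]
  simp only [map_mul]
  field_simp
  ring
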